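/- In the construction described in the context, if v^ℓ ∈ H, then the revenue of the λ-auction A_H on v^ℓ is at least 2 − 2γ. -/
import Mathlib


open Finset MeasureTheory

/-- An `n`-bidder, `m`-item allocation: pairwise disjoint bundles of items. -/
def Alloc (n m : ℕ) : Type :=
  {o : Fin n → Finset (Fin m) // ∀ i j, i ≠ j → o i ∩ o j = ∅}

instance (n m : ℕ) : Inhabited (Alloc n m) :=
  ⟨⟨fun _ => ∅, fun _ _ _ => by simp⟩⟩

instance (n m : ℕ) : Fintype (Alloc n m) :=
  Subtype.fintype _

instance (n m : ℕ) : Nonempty (Alloc n m) := ⟨default⟩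

/-- Maximum of a real-valued function over all allocations. -/
noncomputable def allocMax {n m : ℕ} (f : Alloc n m → ℝ) : ℝ :=
  Finset.univ.sup' Finset.univ_nonempty f

/-- A fixed (canonical) maximizer of a real-valued function over all allocations. -/
noncomputable def chooseMax {n m : ℕ} (f : Alloc n m → ℝ) : Alloc n m :=
  Classical.choose (Finset.exists_max_image Finset.univ f Finset.univ_nonempty)

/-- `os` maximizes the boosted weighted social welfare. -/
def IsMaxAlloc {n m : ℕ} (w : Fin n → ℝ) (lam : Alloc n m → ℝ)
    (v : Fin n → Finset (Fin m) → ℝ) (os : Alloc n m) : Prop :=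
  ∀ o : Alloc n m, (∑ j, w j * v j (o.1 j)) + lam o ≤ (∑ j, w j * v j (os.1 j)) + lam os

/-- Revenue of the AMA with weights `w`, boosts `lam`, on valuations `v`, when the
chosen (welfare-maximizing) allocation is `os`. -/
noncomputable def amaRev {n m : ℕ} (w : Fin n → ℝ) (lam : Alloc n m → ℝ)
    (v : Fin n → Finset (Fin m) → ℝ) (os : Alloc n m) : ℝ :=
  ∑ j, (w j)⁻¹ *
    (allocMax (fun o => (∑ l ∈ Finset.univ.erase j, w l * v l (o.1 l)) + lam o)
      - ((∑ l ∈ Finset.univ.erase j, w l * v l (os.1 l)) + lam os))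

/-- The boosts of the `c`-MBA. -/
def mbaLam {n m : ℕ} (c : ℝ) : Alloc n m → ℝ :=
  fun o => if ∃ i, o.1 i = Finset.univ then c else 0

/-- Revenue of the `c`-MBA (with a fixed tie-breaking rule). -/
noncomputable def mbaRev {n m : ℕ} (v : Fin n → Finset (Fin m) → ℝ) (c : ℝ) : ℝ :=
  amaRev (fun _ => 1) (mbaLam c) v
    (chooseMax fun o => (∑ j, v j (o.1 j)) + mbaLam c o)

/-- Revenue of the MBARP with grand-bundle boost `c` and item reserve prices `r`
(with a fixed tie-breaking rule); the seller participates as bidder `0`. -/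
noncomputable def mbarpRev {n m : ℕ} (v : Fin n → Finset (Fin m) → ℝ) (c : ℝ)
    (r : Fin m → ℝ) : ℝ :=
  let vx : Fin (n + 1) → Finset (Fin m) → ℝ :=
    fun i b => Fin.cases (∑ j ∈ b, r j) (fun i' => v i' b) i
  let g : Fin (n + 1) → Alloc (n + 1) m → ℝ :=
    fun i o => (∑ l ∈ Finset.univ.erase i, vx l (o.1 l)) + mbaLam c o
  let os : Alloc (n + 1) m := chooseMax fun o => (∑ i, vx i (o.1 i)) + mbaLam c o
  ∑ i : Fin n, (allocMax (g i.succ) - g i.succ os)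

/-- Empirical Rademacher complexity of a class `F` on the sample `S`. -/
noncomputable def empRad {X : Type*} (F : Set (X → ℝ)) {N : ℕ} (S : Fin N → X) : ℝ :=
  ((2 : ℝ) ^ N)⁻¹ * ∑ σ : Fin N → Bool,
    ⨆ f ∈ F, (N : ℝ)⁻¹ * ∑ i, (if σ i then (1 : ℝ) else -1) * f (S i)

/-- Rademacher complexity: expected empirical Rademacher complexity over i.i.d. samples. -/
noncomputable def radComp {X : Type*} [MeasurableSpace X] (D : Measure X)
    (F : Set (X → ℝ)) (N : ℕ) : ℝ :=
  ∫ S, empRad F S ∂(Measure.pi fun _ : Fin N => D)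

/-- Pseudo-shattering of the tuple `x` by the class `F`, with witnesses `z`. -/
def PShatters {X : Type*} (F : Set (X → ℝ)) {k : ℕ} (x : Fin k → X) : Prop :=
  ∃ z : Fin k → ℝ, ∀ T : Finset (Fin k), ∃ f ∈ F,
    (∀ i, i ∈ T → f (x i) ≤ z i) ∧ (∀ i, i ∉ T → z i < f (x i))

/-- A valuation is additive if it is determined by its values on singletons. -/
def AdditiveVal {n m : ℕ} (v : Fin n → Finset (Fin m) → ℝ) : Prop :=
  ∀ i b, v i b = ∑ j ∈ b, v i {j}

instance (n m : ℕ) : DecidableEq (Alloc n m) :=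
  fun a b => decidable_of_iff (a.1 = b.1) Subtype.ext_iff.symm

/-- An allocation in which all `m` items are allocated and no single bidder
receives all the items. -/
def SpecialAlloc {n m : ℕ} (o : Alloc n m) : Prop :=
  (∀ j : Fin m, ∃ i, j ∈ o.1 i) ∧ ∀ i, o.1 i ≠ Finset.univ

/-- The additive valuation vector associated with the allocation `o`: bidder `i`
values item `j` at `1` exactly when `j` belongs to the bundle `o.1 i`. -/
def vOf {n m : ℕ} (o : Alloc n m) : Fin n → Finset (Fin m) → ℝ :=
  fun i b => ((b ∩ o.1 i).card : ℝ)

/-- In the lower-bound construction for `λ`-auctions, if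
`õ ∈ H` then the revenue of the auction `A_H` on `v^õ` is at least `2 − 2γ`. -/
theorem stmt10 (n m : ℕ) (hn : 2 ≤ n) (hm : 2 ≤ m)
    (γ : ℝ) (hγ : γ ∈ Set.Ioo (0 : ℝ) 1)
    (H : Finset (Alloc n m)) (hH : ∀ o ∈ H, SpecialAlloc o)
    (ot : Alloc n m) (hot : ot ∈ H)
    (os : Alloc n m)
    (hos : IsMaxAlloc (fun _ => 1) (fun o => if o ∈ H then 0 else 1 - γ) (vOf ot) os) :
    2 - 2 * γ ≤
      amaRev (fun _ => 1) (fun o => if o ∈ H then 0 else 1 - γ) (vOf ot) os := by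
  classical
  obtain ⟨hγ0, hγ1⟩ := hγ
  set lam : Alloc n m → ℝ := fun o => if o ∈ H then 0 else 1 - γ with hlam
  have hcover : ∀ x : Fin m, ∃ i, x ∈ ot.1 i := (hH ot hot).1
  have hneuniv : ∀ i, ot.1 i ≠ Finset.univ := (hH ot hot).2
  -- total size of the bundles of ot is m
  have hsum : ∑ i, (ot.1 i).card = m := by
    have hdisj : ∀ i ∈ (Finset.univ : Finset (Fin n)), ∀ j ∈ (Finset.univ : Finset (Fin n)),
        i ≠ j → Disjoint (ot.1 i) (ot.1 j) := by
      intro i _ j _ hij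
      simpa [Finset.disjoint_iff_inter_eq_empty] using ot.2 i j hij
    have h1 := (Finset.card_biUnion hdisj).symm
    have h2 : (Finset.univ.biUnion ot.1) = (Finset.univ : Finset (Fin m)) := by
      apply Finset.eq_univ_iff_forall.2
      intro x
      simp only [Finset.mem_biUnion, Finset.mem_univ, true_and]
      exact hcover x
    rw [h2] at h1
    simpa using h1
  have hlam_le : ∀ o : Alloc n m, lam o ≤ 1 - γ := by
    intro o
    by_cases h : o ∈ H <;> simp [hlam, h] <;> linarith
  have hlam_ot : lam ot = 0 := by simp [hlam, hot]
  -- the maximizer os equals ot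
  have hosot : os = ot := by
    have hos' := hos ot
    simp only [one_mul] at hos'
    have hval_ot : ∑ j, vOf ot j (ot.1 j) = (m : ℝ) := by
      simp only [vOf, Finset.inter_self]
      rw [← Nat.cast_sum, hsum]
    set S : ℕ := ∑ i, ((os.1 i ∩ ot.1 i).card) with hS
    have hval_os : ∑ j, vOf ot j (os.1 j) = (S : ℝ) := by
      simp only [vOf, hS]
      rw [Nat.cast_sum]
    rw [hval_ot, hval_os, hlam_ot, add_zero] at hos'
    have hSm : S ≤ m := by
      rw [← hsum]
      exact Finset.sum_le_sum (fun i _ => Finset.card_le_card Finset.inter_subset_right)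
    have hmS : (m : ℝ) ≤ S + (1 - γ) := le_trans hos' (by linarith [hlam_le os])
    have hSm' : m ≤ S := by
      have : (m : ℝ) < (S : ℝ) + 1 := by linarith
      exact_mod_cast Nat.lt_add_one_iff.mp (by exact_mod_cast this)
    have hSeq : S = m := le_antisymm hSm hSm'
    -- termwise equality of cardinalities
    have hterm : ∀ i ∈ (Finset.univ : Finset (Fin n)),
        ((os.1 i ∩ ot.1 i).card) = (ot.1 i).card := by
      apply (Finset.sum_eq_sum_iff_of_le
        (fun i _ => Finset.card_le_card Finset.inter_subset_right)).1
      rw [← hS, hSeq, hsum]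
    have hsub : ∀ i, ot.1 i ⊆ os.1 i := by
      intro i
      have := Finset.eq_of_subset_of_card_le (Finset.inter_subset_right : os.1 i ∩ ot.1 i ⊆ ot.1 i)
        (le_of_eq (hterm i (Finset.mem_univ i)).symm)
      exact Finset.inter_eq_right.1 this
    apply Subtype.ext
    funext i
    apply Finset.Subset.antisymm _ (hsub i)
    intro x hx
    obtain ⟨i', hx'⟩ := hcover x
    by_cases h : i = i'
    · subst h; exact hx'
    · exfalso
      have hx'' : x ∈ os.1 i' := hsub i' hx'
      have := os.2 i i' h
      have : x ∈ os.1 i ∩ os.1 i' := Finset.mem_inter.2 ⟨hx, hx''⟩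
      rw [os.2 i i' h] at this
      exact absurd this (Finset.notMem_empty x)
  rw [hosot]
  -- the base utility without bidder j, at the chosen allocation ot
  have hbase : ∀ j : Fin n,
      (∑ l ∈ Finset.univ.erase j, vOf ot l (ot.1 l)) = (m : ℝ) - ((ot.1 j).card : ℝ) := by
    intro j
    rw [Finset.sum_erase_eq_sub (Finset.mem_univ j)]
    simp only [vOf, Finset.inter_self]
    rw [← Nat.cast_sum, hsum]
  -- each payment term is nonnegative
  have hTerm_nonneg : ∀ j : Fin n,
      0 ≤ allocMax (fun o => (∑ l ∈ Finset.univ.erase j, vOf ot l (o.1 l)) + lam o)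
        - ((∑ l ∈ Finset.univ.erase j, vOf ot l (ot.1 l)) + lam ot) := by
    intro j
    have := Finset.le_sup' (f := fun o : Alloc n m =>
      (∑ l ∈ Finset.univ.erase j, vOf ot l (o.1 l)) + lam o) (Finset.mem_univ ot)
    simp only [allocMax]
    linarith
  -- key lower bound for bidders with a nonempty bundle
  have hTerm_key : ∀ j : Fin n, ot.1 j ≠ ∅ →
      1 - γ ≤ allocMax (fun o => (∑ l ∈ Finset.univ.erase j, vOf ot l (o.1 l)) + lam o)
        - ((∑ l ∈ Finset.univ.erase j, vOf ot l (ot.1 l)) + lam ot) := by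
    intro j hj
    obtain ⟨x, hx⟩ := Finset.nonempty_iff_ne_empty.2 hj
    set o' : Alloc n m := ⟨fun l => if l = j then ∅ else ot.1 l, by
      intro a b hab
      by_cases ha : a = j
      · simp [ha]
      · by_cases hb : b = j
        · simp [hb]
        · simpa [ha, hb] using ot.2 a b hab⟩ with ho'
    have ho'H : o' ∉ H := by
      intro hmem
      obtain ⟨i, hi⟩ := (hH o' hmem).1 x
      by_cases h : i = j
      · subst h; simp [ho'] at hi
      · simp only [ho', if_neg h] at hi
        have := ot.2 i j h
        have hmem2 : x ∈ ot.1 i ∩ ot.1 j := Finset.mem_inter.2 ⟨hi, hx⟩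
        rw [this] at hmem2
        exact absurd hmem2 (Finset.notMem_empty x)
    have hlam_o' : lam o' = 1 - γ := by simp [hlam, ho'H]
    have hval_o' : (∑ l ∈ Finset.univ.erase j, vOf ot l (o'.1 l))
        = (m : ℝ) - ((ot.1 j).card : ℝ) := by
      rw [← hbase j]
      apply Finset.sum_congr rfl
      intro l hl
      have hlj : l ≠ j := Finset.ne_of_mem_erase hl
      simp [ho', vOf, hlj]
    have hle := Finset.le_sup' (f := fun o : Alloc n m =>
      (∑ l ∈ Finset.univ.erase j, vOf ot l (o.1 l)) + lam o) (Finset.mem_univ o')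
    simp only [allocMax]
    rw [hbase j, hlam_ot]
    have : (m : ℝ) - ((ot.1 j).card : ℝ) + (1 - γ) ≤
        Finset.univ.sup' Finset.univ_nonempty (fun o : Alloc n m =>
          (∑ l ∈ Finset.univ.erase j, vOf ot l (o.1 l)) + lam o) := by
      rw [← hval_o', ← hlam_o']
      exact hle
    linarith
  -- there are two distinct bidders with nonempty bundles
  obtain ⟨j1, j2, hj12, hj1, hj2⟩ : ∃ j1 j2 : Fin n, j1 ≠ j2 ∧ ot.1 j1 ≠ ∅ ∧ ot.1 j2 ≠ ∅ := by
    obtain ⟨i1, hi1⟩ := hcover ⟨0, by omega⟩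
    obtain ⟨y, hy⟩ : ∃ y : Fin m, y ∉ ot.1 i1 := by
      by_contra h
      push_neg at h
      exact hneuniv i1 (Finset.eq_univ_iff_forall.2 h)
    obtain ⟨i2, hi2⟩ := hcover y
    refine ⟨i1, i2, ?_, ?_, ?_⟩
    · rintro rfl; exact hy hi2
    · exact Finset.ne_empty_of_mem hi1
    · exact Finset.ne_empty_of_mem hi2
  -- conclude
  unfold amaRev
  simp only [inv_one, one_mul]
  have hsub : ({j1, j2} : Finset (Fin n)) ⊆ Finset.univ := Finset.subset_univ _
  have hstep : ∑ j ∈ ({j1, j2} : Finset (Fin n)),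
      (allocMax (fun o => (∑ l ∈ Finset.univ.erase j, vOf ot l (o.1 l)) + lam o)
        - ((∑ l ∈ Finset.univ.erase j, vOf ot l (ot.1 l)) + lam ot)) ≤
      ∑ j : Fin n,
      (allocMax (fun o => (∑ l ∈ Finset.univ.erase j, vOf ot l (o.1 l)) + lam o)
        - ((∑ l ∈ Finset.univ.erase j, vOf ot l (ot.1 l)) + lam ot)) :=
    Finset.sum_le_sum_of_subset_of_nonneg hsub (fun j _ _ => hTerm_nonneg j)
  rw [Finset.sum_pair hj12] at hstep
  have h1 := hTerm_key j1 hj1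
  have h2 := hTerm_key j2 hj2
  linarith
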